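/- Let M be symmetric positive definite with minimal eigenvalue λ_M and let x, y ∈ ℝⁿ, ξ ∈ ℝⁿ. Then for any α ∈ (1/2, 1): ‖ξ + M(x−y)‖² + 2‖M(y−x)‖² ≥ (2 − 1/α)λ_M ‖y−x‖²_M + (1−α)‖ξ‖². -/

import Mathlib

open scoped RealInnerProductSpace

theorem stmt_16 {n : ℕ}
    (M : EuclideanSpace ℝ (Fin n) →L[ℝ] EuclideanSpace ℝ (Fin n))
    (hMsym : IsSelfAdjoint M)
    (hMpd : ∀ z, z ≠ 0 → 0 < ⟪M z, z⟫)
    (lamM : ℝ) (hlam_pos : 0 < lamM)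
    (hlam_eig : Module.End.HasEigenvalue
      (M : EuclideanSpace ℝ (Fin n) →ₗ[ℝ] EuclideanSpace ℝ (Fin n)) lamM)
    (hlam_min : ∀ μ : ℝ,
      Module.End.HasEigenvalue
        (M : EuclideanSpace ℝ (Fin n) →ₗ[ℝ] EuclideanSpace ℝ (Fin n)) μ → lamM ≤ μ)
    (x y ξ : EuclideanSpace ℝ (Fin n))
    (α : ℝ) (hα₁ : 1/2 < α) (hα₂ : α < 1) :
    ‖ξ + M (x - y)‖ ^ 2 + 2 * ‖M (y - x)‖ ^ 2 ≥
      (2 - 1/α) * lamM * ⟪M (y - x), y - x⟫ + (1 - α) * ‖ξ‖ ^ 2 := by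
  have hα0 : (0:ℝ) < α := by linarith
  -- nontriviality of the space from the existence of an eigenvalue
  obtain ⟨v, hv⟩ := hlam_eig.exists_hasEigenvector
  haveI : Nontrivial (EuclideanSpace ℝ (Fin n)) := ⟨v, 0, hv.2⟩
  have hsymm : (M : EuclideanSpace ℝ (Fin n) →ₗ[ℝ]
      EuclideanSpace ℝ (Fin n)).IsSymmetric := hMsym.isSymmetric
  -- quadratic lower bound: lamM * ‖z‖² ≤ ⟪M z, z⟫
  have hquad : ∀ z : EuclideanSpace ℝ (Fin n), lamM * ‖z‖ ^ 2 ≤ ⟪M z, z⟫ := by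
    intro z
    rcases eq_or_ne z 0 with rfl | hz
    · simp
    · have hinf := hsymm.hasEigenvalue_iInf_of_finiteDimensional
      have hle : lamM ≤ ⨅ w : { w : EuclideanSpace ℝ (Fin n) // w ≠ 0 },
          RCLike.re ⟪(M : EuclideanSpace ℝ (Fin n) →ₗ[ℝ] EuclideanSpace ℝ (Fin n)) w, w⟫
            / ‖(w : EuclideanSpace ℝ (Fin n))‖ ^ 2 := hlam_min _ hinf
      have hbdd : BddBelow (Set.range fun w : { w : EuclideanSpace ℝ (Fin n) // w ≠ 0 } =>
          RCLike.re ⟪(M : EuclideanSpace ℝ (Fin n) →ₗ[ℝ] EuclideanSpace ℝ (Fin n)) w, w⟫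
            / ‖(w : EuclideanSpace ℝ (Fin n))‖ ^ 2) := by
        refine ⟨0, ?_⟩
        rintro r ⟨w, rfl⟩
        have h := (hMpd w w.2).le
        simp only [ContinuousLinearMap.coe_coe, RCLike.re_to_real]
        exact div_nonneg h (by positivity)
      have hle2 := le_trans hle (ciInf_le hbdd ⟨z, hz⟩)
      have hz2 : (0:ℝ) < ‖z‖ ^ 2 := pow_pos (norm_pos_iff.mpr hz) 2
      have : lamM ≤ ⟪M z, z⟫ / ‖z‖ ^ 2 := by simpa using hle2
      rw [le_div_iff₀ hz2] at this
      linarith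
  -- key estimate : ‖M z‖² ≥ lamM * ⟪M z, z⟫
  have hkey : ∀ z : EuclideanSpace ℝ (Fin n), lamM * ⟪M z, z⟫ ≤ ‖M z‖ ^ 2 := by
    intro z
    set Nz : EuclideanSpace ℝ (Fin n) := M z - lamM • z with hNz
    have hN : ⟪Nz, z⟫ ≥ 0 := by
      have := hquad z
      have : ⟪Nz, z⟫ = ⟪M z, z⟫ - lamM * ‖z‖ ^ 2 := by
        rw [hNz, inner_sub_left, real_inner_smul_left, real_inner_self_eq_norm_sq]
      linarith [hquad z]
    have hMz : M z = Nz + lamM • z := by rw [hNz]; abel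
    have expand : ‖M z‖ ^ 2 - lamM * ⟪M z, z⟫ = ‖Nz‖ ^ 2 + lamM * ⟪Nz, z⟫ := by
      rw [← real_inner_self_eq_norm_sq, hMz]
      rw [inner_add_left, inner_add_right, inner_add_right, inner_add_left,
        real_inner_smul_left, real_inner_smul_right, real_inner_smul_left,
        real_inner_self_eq_norm_sq, real_inner_comm z Nz,
        real_inner_comm z (lamM • z)]
      ring
    nlinarith [sq_nonneg ‖Nz‖, mul_nonneg hlam_pos.le hN]
  -- now the main computation
  have hflip : M (y - x) = - M (x - y) := by rw [← map_neg]; congr 1; abel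
  set w : EuclideanSpace ℝ (Fin n) := M (x - y) with hw
  have hnorm : ‖M (y - x)‖ = ‖w‖ := by rw [hflip, norm_neg]
  have hip : ⟪M (y - x), y - x⟫ = ⟪w, x - y⟫ := by
    rw [hflip, inner_neg_left]
    have : (y - x : EuclideanSpace ℝ (Fin n)) = -(x - y) := by abel
    rw [this, inner_neg_right]; ring
  have hkey' : lamM * ⟪w, x - y⟫ ≤ ‖w‖ ^ 2 := hkey (x - y)
  have hip_nonneg : 0 ≤ ⟪w, x - y⟫ := by
    rcases eq_or_ne (x - y : EuclideanSpace ℝ (Fin n)) 0 with h0 | h0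
    · simp [hw, h0]
    · exact (hMpd _ h0).le
  have hexpand : ‖ξ + w‖ ^ 2 = ‖ξ‖ ^ 2 + 2 * ⟪ξ, w⟫ + ‖w‖ ^ 2 := by
    rw [← real_inner_self_eq_norm_sq, inner_add_left, inner_add_right, inner_add_right,
      real_inner_self_eq_norm_sq, real_inner_self_eq_norm_sq, real_inner_comm w ξ]
    ring
  have hcs : ⟪ξ, w⟫ ≥ -(‖ξ‖ * ‖w‖) := by
    have := abs_real_inner_le_norm ξ w
    have := abs_le.mp this
    linarith [this.1]
  rw [hexpand, hnorm, hip]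
  set a := ‖ξ‖ with ha
  set b := ‖w‖ with hb
  set p : ℝ := ⟪w, x - y⟫ with hp
  set i : ℝ := ⟪ξ, w⟫ with hi
  have h1 : (0:ℝ) < 2*α - 1 := by linarith
  have hkey2 : lamM * p ≤ b^2 := hkey'
  have h2ab : 2*α*i ≥ -(α^2*a^2 + b^2) := by
    nlinarith [sq_nonneg (α*a - b), hcs, hα0, mul_le_mul_of_nonneg_left hcs hα0.le]
  have hfin : (2*α-1)*(lamM*p) + (α*(1-α))*a^2 ≤ α*(a^2 + 2*i + 3*b^2) := by
    nlinarith [mul_le_mul_of_nonneg_left hkey2 h1.le, h2ab,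
      mul_nonneg hα0.le (sq_nonneg b)]
  have heq : α*((2-1/α)*lamM*p + (1-α)*a^2) = (2*α-1)*(lamM*p) + (α*(1-α))*a^2 := by
    field_simp
  have hmain : (2-1/α)*lamM*p + (1-α)*a^2 ≤ a^2 + 2*i + 3*b^2 := by
    rw [← mul_le_mul_iff_right₀ hα0, heq]
    linarith [hfin]
  linarith [hmain]
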